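/- For all n ≥ 2 and all x ∈ ℂ, the Hankel determinants of the sequence μ_k satisfy the shift identity (-1)^{n-1} · det[μ_{ℓ+j}(x)]_{ℓ,j=1}^{n-1} = det[μ_{ℓ+j-2}(x)]_{ℓ,j=1}^{n}. -/

import Mathlib

open Complex

/-- `μ_k(x)`: the `k`-th Taylor coefficient in `t` of `exp(-t³/3 + t·x)`. -/
noncomputable def mu (k : ℕ) (x : ℂ) : ℂ :=
  iteratedDeriv k (fun t : ℂ => Complex.exp (-t ^ 3 / 3 + t * x)) 0 / (Nat.factorial k)

open Complex Polynomial


/-- exp of a cubic -/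
noncomputable def Fe (c d : ℂ) : ℂ → ℂ := fun t => Complex.exp (c * t ^ 3 + d * t)

noncomputable def EF (c d : ℂ) : ℕ → Polynomial ℂ
  | 0 => 1
  | k + 1 => (EF c d k).derivative + (C (3 * c) * X ^ 2 + C d) * EF c d k

lemma hasDerivAt_Fe (c d t : ℂ) :
    HasDerivAt (Fe c d) ((3 * c * t ^ 2 + d) * Fe c d t) t := by
  have h : HasDerivAt (fun u : ℂ => c * u ^ 3 + d * u) (3 * c * t ^ 2 + d) t := by
    have h1 := (hasDerivAt_pow 3 t).const_mul c
    have h2 := (hasDerivAt_id t).const_mul d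
    have := h1.add h2
    refine this.congr_deriv ?_
    push_cast
    ring
  have := h.cexp
  refine this.congr_deriv ?_
  unfold Fe
  ring

lemma iteratedDeriv_Fe (c d : ℂ) (k : ℕ) :
    iteratedDeriv k (Fe c d) = fun t => (EF c d k).eval t * Fe c d t := by
  induction k with
  | zero => funext t; simp [EF]
  | succ k ih =>
    funext t
    rw [iteratedDeriv_succ, ih]
    have h := ((EF c d k).hasDerivAt t).mul (hasDerivAt_Fe c d t)
    have h2 : HasDerivAt (fun u => (EF c d k).eval u * Fe c d u)
        ((EF c d (k + 1)).eval t * Fe c d t) t := by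
      refine h.congr_deriv ?_
      simp only [EF, eval_add, eval_mul, eval_C, eval_X, eval_pow]
      ring
    exact h2.deriv

lemma hasDerivAt_iteratedDeriv_Fe (c d : ℂ) (k : ℕ) (t : ℂ) :
    HasDerivAt (iteratedDeriv k (Fe c d)) (iteratedDeriv (k + 1) (Fe c d) t) t := by
  rw [iteratedDeriv_Fe, iteratedDeriv_Fe]
  have h := ((EF c d k).hasDerivAt t).mul (hasDerivAt_Fe c d t)
  refine h.congr_deriv ?_
  simp only [EF, eval_add, eval_mul, eval_C, eval_X, eval_pow]
  ring
open Complex Polynomial Finset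

lemma pascal_conv (a b : ℕ → ℂ) (s : ℕ) :
    ∑ j ∈ range (s + 1), (s.choose j : ℂ) * (a (j + 1) * b (s - j) + a j * b (s - j + 1))
      = ∑ j ∈ range (s + 2), ((s + 1).choose j : ℂ) * (a j * b (s + 1 - j)) := by
  have hR : ∑ j ∈ range (s + 2), ((s + 1).choose j : ℂ) * (a j * b (s + 1 - j))
      = (∑ j ∈ range (s + 1), ((s.choose j : ℂ) + (s.choose (j + 1) : ℂ))
          * (a (j + 1) * b (s - j))) + a 0 * b (s + 1) := by
    rw [Finset.sum_range_succ' (fun j => ((s + 1).choose j : ℂ) * (a j * b (s + 1 - j))) (s + 1)]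
    simp only [Nat.choose_succ_succ, Nat.succ_sub_succ_eq_sub, Nat.choose_zero_right,
      Nat.cast_add, Nat.cast_one, one_mul, Nat.sub_zero]
  have hM : ∑ j ∈ range (s + 1), (s.choose (j + 1) : ℂ) * (a (j + 1) * b (s - j))
      = (∑ j ∈ range (s + 1), (s.choose j : ℂ) * (a j * b (s + 1 - j))) - a 0 * b (s + 1) := by
    have h2 : ∑ j ∈ range (s + 2), (s.choose j : ℂ) * (a j * b (s + 1 - j))
        = (∑ j ∈ range (s + 1), (s.choose (j + 1) : ℂ) * (a (j + 1) * b (s - j)))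
          + a 0 * b (s + 1) := by
      rw [Finset.sum_range_succ' (fun j => (s.choose j : ℂ) * (a j * b (s + 1 - j))) (s + 1)]
      simp only [Nat.succ_sub_succ_eq_sub, Nat.choose_zero_right, Nat.cast_one, one_mul,
        Nat.sub_zero]
    have h3 : ∑ j ∈ range (s + 2), (s.choose j : ℂ) * (a j * b (s + 1 - j))
        = ∑ j ∈ range (s + 1), (s.choose j : ℂ) * (a j * b (s + 1 - j)) := by
      rw [Finset.sum_range_succ]
      simp [Nat.choose_succ_self]
    rw [h3] at h2
    linear_combination -h2
  have hL2 : ∑ j ∈ range (s + 1), (s.choose j : ℂ) * (a j * b (s - j + 1))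
      = ∑ j ∈ range (s + 1), (s.choose j : ℂ) * (a j * b (s + 1 - j)) := by
    refine Finset.sum_congr rfl fun j hj => ?_
    rw [Finset.mem_range] at hj
    have h : s - j + 1 = s + 1 - j := by omega
    rw [h]
  calc ∑ j ∈ range (s + 1), (s.choose j : ℂ) * (a (j + 1) * b (s - j) + a j * b (s - j + 1))
      = (∑ j ∈ range (s + 1), (s.choose j : ℂ) * (a (j + 1) * b (s - j)))
        + ∑ j ∈ range (s + 1), (s.choose j : ℂ) * (a j * b (s - j + 1)) := by
        rw [← Finset.sum_add_distrib]; refine Finset.sum_congr rfl fun j _ => by ring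
    _ = (∑ j ∈ range (s + 1), (s.choose j : ℂ) * (a (j + 1) * b (s - j)))
        + ((∑ j ∈ range (s + 1), (s.choose (j + 1) : ℂ) * (a (j + 1) * b (s - j)))
          + a 0 * b (s + 1)) := by rw [hL2, hM]; ring
    _ = _ := by
        rw [hR, ← add_assoc, ← Finset.sum_add_distrib]
        refine congrArg₂ _ (Finset.sum_congr rfl fun j _ => by ring) rfl

lemma leibniz_Fe (c d c' d' : ℂ) (s : ℕ) (t : ℂ) :
    iteratedDeriv s (fun u => Fe c d u * Fe c' d' u) t
      = ∑ j ∈ range (s + 1), (s.choose j : ℂ) *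
          (iteratedDeriv j (Fe c d) t * iteratedDeriv (s - j) (Fe c' d') t) := by
  induction s generalizing t with
  | zero => simp
  | succ s ih =>
    rw [iteratedDeriv_succ]
    have hfun : iteratedDeriv s (fun u => Fe c d u * Fe c' d' u)
        = fun t => ∑ j ∈ range (s + 1), (s.choose j : ℂ) *
          (iteratedDeriv j (Fe c d) t * iteratedDeriv (s - j) (Fe c' d') t) := funext ih
    rw [hfun]
    have hD : HasDerivAt (fun t => ∑ j ∈ range (s + 1), (s.choose j : ℂ) *
          (iteratedDeriv j (Fe c d) t * iteratedDeriv (s - j) (Fe c' d') t))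
        (∑ j ∈ range (s + 1), (s.choose j : ℂ) *
          (iteratedDeriv (j + 1) (Fe c d) t * iteratedDeriv (s - j) (Fe c' d') t
            + iteratedDeriv j (Fe c d) t * iteratedDeriv (s - j + 1) (Fe c' d') t)) t := by
      refine HasDerivAt.fun_sum fun j _ => ?_
      exact ((hasDerivAt_iteratedDeriv_Fe c d j t).mul
        (hasDerivAt_iteratedDeriv_Fe c' d' (s - j) t)).const_mul _
    rw [hD.deriv]
    exact pascal_conv (fun j => iteratedDeriv j (Fe c d) t)
      (fun j => iteratedDeriv j (Fe c' d') t) s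

lemma iteratedDeriv_one_fun (s : ℕ) (t : ℂ) :
    iteratedDeriv s (fun _ : ℂ => (1 : ℂ)) t = if s = 0 then 1 else 0 := by
  have hz : ∀ (m : ℕ) (u : ℂ), iteratedDeriv m (fun _ : ℂ => (0 : ℂ)) u = 0 := by
    intro m
    induction m with
    | zero => intro u; simp
    | succ m ih =>
      intro u
      rw [iteratedDeriv_succ']
      simpa [deriv_const'] using ih u
  cases s with
  | zero => simp
  | succ s =>
    rw [iteratedDeriv_succ']
    simp only [deriv_const']
    simpa using hz s t

/-- the key convolution identity, raw form -/
lemma conv_raw (x : ℂ) (s : ℕ) (hs : 1 ≤ s) :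
    ∑ j ∈ range (s + 1), (s.choose j : ℂ) *
        (iteratedDeriv j (Fe (-3⁻¹) x) 0 *
          iteratedDeriv (s - j) (Fe 3⁻¹ (-x)) 0) = 0 := by
  have h1 : (fun u : ℂ => Fe (-3⁻¹) x u * Fe 3⁻¹ (-x) u) = fun _ : ℂ => (1 : ℂ) := by
    funext u
    unfold Fe
    rw [← Complex.exp_add]
    rw [show -3⁻¹ * u ^ 3 + x * u + (3⁻¹ * u ^ 3 + -x * u) = 0 by ring, Complex.exp_zero]
  have h2 := leibniz_Fe (-3⁻¹) x 3⁻¹ (-x) s 0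
  rw [h1, iteratedDeriv_one_fun] at h2
  rw [if_neg (by omega)] at h2
  exact h2.symm

/-- iterated derivatives of the reflected function -/
lemma iteratedDeriv_Fe_neg (x : ℂ) (m : ℕ) :
    iteratedDeriv m (Fe 3⁻¹ (-x)) 0 = (-1 : ℂ) ^ m * iteratedDeriv m (Fe (-3⁻¹) x) 0 := by
  have h1 : Fe 3⁻¹ (-x) = fun u : ℂ => Fe (-3⁻¹) x (-u) := by
    funext u
    unfold Fe
    congr 1
    ring
  rw [h1, iteratedDeriv_comp_neg, neg_zero, smul_eq_mul]

lemma mu_eq (x : ℂ) (k : ℕ) :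
    mu k x = iteratedDeriv k (Fe (-3⁻¹) x) 0 / (Nat.factorial k) := by
  unfold mu
  congr 2
  funext t
  unfold Fe
  congr 1
  ring

lemma mu_zero_eq (x : ℂ) : mu 0 x = 1 := by
  rw [mu_eq]
  simp [Fe]

/-- convolution identity in μ-form -/
lemma conv_mu (x : ℂ) (s : ℕ) (hs : 1 ≤ s) :
    ∑ u ∈ range (s + 1), mu u x * ((-1 : ℂ) ^ (s - u) * mu (s - u) x) = 0 := by
  have h := conv_raw x s hs
  have hfac : (Nat.factorial s : ℂ) ≠ 0 := by exact_mod_cast (Nat.factorial_pos s).ne'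
  have key : ∑ u ∈ range (s + 1), mu u x * ((-1 : ℂ) ^ (s - u) * mu (s - u) x)
      = (∑ j ∈ range (s + 1), (s.choose j : ℂ) *
        (iteratedDeriv j (Fe (-3⁻¹) x) 0 * iteratedDeriv (s - j) (Fe 3⁻¹ (-x)) 0))
        / (Nat.factorial s : ℂ) := by
    rw [Finset.sum_div]
    refine Finset.sum_congr rfl fun j hj => ?_
    rw [Finset.mem_range] at hj
    have hj' : j ≤ s := by omega
    rw [iteratedDeriv_Fe_neg, mu_eq, mu_eq]
    set A := iteratedDeriv j (Fe (-3⁻¹) x) 0 with hA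
    set B := iteratedDeriv (s - j) (Fe (-3⁻¹) x) 0 with hB
    have hchoose : (s.choose j : ℂ) * (Nat.factorial j) * (Nat.factorial (s - j))
        = (Nat.factorial s : ℂ) := by
      exact_mod_cast congrArg (Nat.cast : ℕ → ℂ) (Nat.choose_mul_factorial_mul_factorial hj')
    have hfj : (Nat.factorial j : ℂ) ≠ 0 := by exact_mod_cast (Nat.factorial_pos j).ne'
    have hfsj : (Nat.factorial (s - j) : ℂ) ≠ 0 := by
      exact_mod_cast (Nat.factorial_pos (s - j)).ne'
    field_simp
    linear_combination (- A * B) * hchoose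
  rw [key, h, zero_div]

namespace HankelShift

/-- Toeplitz kernel -/
noncomputable def Tm (x : ℂ) : ℕ → ℕ → ℂ := fun i j => if i ≤ j then mu (j - i) x else 0

/-- inverse Toeplitz kernel -/
noncomputable def Sm (x : ℂ) : ℕ → ℕ → ℂ := fun i j =>
  if i ≤ j then (-1 : ℂ) ^ (j - i) * mu (j - i) x else 0

lemma conv_TS (x : ℂ) (N r c : ℕ) (hr : r ≤ N) (hc : c ≤ N) :
    ∑ t ∈ Finset.range (N + 1), Tm x r t * Sm x t c = if r = c then 1 else 0 := by
  rcases lt_trichotomy r c with hlt | heq | hgt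
  · rw [if_neg (by omega)]
    obtain ⟨s, rfl⟩ : ∃ s, c = r + s := ⟨c - r, by omega⟩
    have hs1 : 1 ≤ s := by omega
    have hsub : (Finset.range (s + 1)).map
        ⟨fun u => r + u, add_right_injective r⟩ ⊆ Finset.range (N + 1) := by
      intro t ht
      simp only [Finset.mem_map, Finset.mem_range, Function.Embedding.coeFn_mk] at ht
      obtain ⟨u, hu, rfl⟩ := ht
      simp only [Finset.mem_range]
      omega
    rw [← Finset.sum_subset hsub]
    · rw [Finset.sum_map]
      simp only [Function.Embedding.coeFn_mk]
      have hcong : ∀ u ∈ Finset.range (s + 1),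
          Tm x r (r + u) * Sm x (r + u) (r + s)
            = mu u x * ((-1 : ℂ) ^ (s - u) * mu (s - u) x) := by
        intro u hu
        rw [Finset.mem_range] at hu
        unfold Tm Sm
        rw [if_pos (by omega), if_pos (by omega)]
        have h1 : r + u - r = u := by omega
        have h2 : r + s - (r + u) = s - u := by omega
        rw [h1, h2]
      rw [Finset.sum_congr rfl hcong]
      exact conv_mu x s hs1
    · intro t ht htn
      simp only [Finset.mem_map, Finset.mem_range, Function.Embedding.coeFn_mk] at htn
      have hcases : t < r ∨ r + s < t := by
        by_contra hcon
        push_neg at hcon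
        exact htn ⟨t - r, by omega, by omega⟩
      unfold Tm Sm
      rcases hcases with h | h
      · rw [if_neg (show ¬ r ≤ t by omega), zero_mul]
      · rw [if_neg (show ¬ t ≤ r + s by omega), mul_zero]
  · rw [if_pos heq]
    subst heq
    rw [Finset.sum_eq_single r]
    · unfold Tm Sm
      rw [if_pos le_rfl, if_pos le_rfl]
      simp [mu_zero_eq]
    · intro t _ htne
      unfold Tm Sm
      rcases lt_or_gt_of_ne htne with h | h
      · rw [if_neg (show ¬ r ≤ t by omega), zero_mul]
      · rw [if_neg (show ¬ t ≤ r by omega), mul_zero]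
    · intro habs
      exact absurd (Finset.mem_range.mpr (by omega)) habs
  · rw [if_neg (by omega)]
    refine Finset.sum_eq_zero fun t _ => ?_
    unfold Tm Sm
    rcases le_or_gt r t with h | h
    · rw [if_neg (show ¬ t ≤ c by omega), mul_zero]
    · rw [if_neg (show ¬ r ≤ t by omega), zero_mul]

variable (x : ℂ) (k : ℕ)

/-- row labels -/
def ri : Fin (k + 1) ⊕ Fin k → ℕ := Sum.elim (fun a => (a : ℕ)) (fun b => k + 1 + (b : ℕ))

/-- column labels -/
def ci : Fin k ⊕ Fin (k + 1) → ℕ := Sum.elim (fun b => (b : ℕ)) (fun a => k + (a : ℕ))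

lemma ri_le : ∀ r, ri k r ≤ 2 * k := by
  rintro (a | b) <;> simp [ri] <;> omega

lemma ci_le : ∀ c, ci k c ≤ 2 * k := by
  rintro (b | a) <;> simp [ci] <;> omega

lemma ri_inj : Function.Injective (ri k) := by
  rintro (a | b) (a' | b') h <;> simp only [ri, Sum.elim_inl, Sum.elim_inr] at h
  · exact congrArg Sum.inl (Fin.ext h)
  · exact absurd h (by have := a.isLt; omega)
  · exact absurd h (by have := a'.isLt; omega)
  · exact congrArg Sum.inr (Fin.ext (by omega))

lemma ci_inj : Function.Injective (ci k) := by
  rintro (b | a) (b' | a') h <;> simp only [ci, Sum.elim_inl, Sum.elim_inr] at h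
  · exact congrArg Sum.inl (Fin.ext h)
  · exact absurd h (by have := b.isLt; omega)
  · exact absurd h (by have := b'.isLt; omega)
  · exact congrArg Sum.inr (Fin.ext (by omega))

noncomputable def Xm : Matrix (Fin (k + 1) ⊕ Fin k) (Fin k ⊕ Fin (k + 1)) ℂ :=
  Matrix.of fun r c => Tm x (ri k r) (ci k c)

noncomputable def Em : Matrix (Fin k ⊕ Fin (k + 1)) (Fin (k + 1) ⊕ Fin k) ℂ :=
  Matrix.of fun c r => Sm x (ci k c) (ri k r)

lemma hXE : Xm x k * Em x k = 1 := by
  ext r r'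
  rw [Matrix.mul_apply]
  have hlt : ∀ c : Fin k ⊕ Fin (k + 1), ci k c < 2 * k + 1 := fun c => by
    have := ci_le k c; omega
  have hbij : Function.Bijective (fun c => (⟨ci k c, hlt c⟩ : Fin (2 * k + 1))) := by
    rw [Fintype.bijective_iff_injective_and_card]
    constructor
    · intro c c' h
      exact ci_inj k (congrArg Fin.val h)
    · simp; omega
  have hsum : ∑ c : Fin k ⊕ Fin (k + 1), Xm x k r c * Em x k c r'
      = ∑ t : Fin (2 * k + 1), Tm x (ri k r) (t : ℕ) * Sm x (t : ℕ) (ri k r') :=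
    (Fintype.sum_bijective _ hbij _ _ fun c => rfl)
  rw [hsum, Fin.sum_univ_eq_sum_range (fun t => Tm x (ri k r) t * Sm x t (ri k r'))]
  rw [conv_TS x (2 * k) _ _ (ri_le k r) (ri_le k r')]
  rw [Matrix.one_apply]
  congr 1
  simp only [eq_iff_iff]
  exact ⟨fun h => ri_inj k h, fun h => congrArg (ri k) h⟩

noncomputable def Zm : Matrix (Fin k ⊕ Fin (k + 1)) (Fin (k + 1) ⊕ Fin k) ℂ :=
  Matrix.of fun c r =>
    Sum.elim (fun a => if c = Sum.inr a then (1 : ℂ) else 0) (fun b => Em x k c (Sum.inr b)) r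

lemma hXZ : Xm x k * Zm x k
    = Matrix.fromBlocks ((Xm x k).toBlocks₁₂) 0 ((Xm x k).toBlocks₂₂) 1 := by
  ext r r'
  rcases r' with a | b
  · rw [Matrix.mul_apply]
    have : ∀ c, Xm x k r c * Zm x k c (Sum.inl a)
        = if c = Sum.inr a then Xm x k r c else 0 := by
      intro c
      show Xm x k r c * (if c = Sum.inr a then (1 : ℂ) else 0) = _
      split <;> simp
    rw [Finset.sum_congr rfl fun c _ => this c, Finset.sum_ite_eq' Finset.univ (Sum.inr a)]
    rcases r with a' | b' <;>
      simp [Matrix.fromBlocks, Matrix.toBlocks₁₂, Matrix.toBlocks₂₂]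
  · have hentry : (Xm x k * Zm x k) r (Sum.inr b) = (Xm x k * Em x k) r (Sum.inr b) := by
      rw [Matrix.mul_apply, Matrix.mul_apply]
      exact Finset.sum_congr rfl fun c _ => rfl
    rw [hentry, hXE]
    rcases r with a' | b' <;>
      simp [Matrix.one_apply, Matrix.fromBlocks]

lemma hdetXZ : (Xm x k * Zm x k).det = ((Xm x k).toBlocks₁₂).det := by
  rw [hXZ, Matrix.det_fromBlocks_zero₁₂, Matrix.det_one, mul_one]

/-- the column-block swap -/
def τe : Fin (k + 1) ⊕ Fin k ≃ Fin k ⊕ Fin (k + 1) := Equiv.sumComm _ _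

lemma hfactor : (Xm x k).submatrix id ⇑(τe k) * (Zm x k).submatrix ⇑(τe k) id
    = Xm x k * Zm x k := by
  have h := Matrix.submatrix_mul_equiv (Xm x k) (Zm x k) id (τe k) id
  simpa using h

lemma hZ' : (Zm x k).submatrix ⇑(τe k) id
    = Matrix.fromBlocks 1 ((Em x k).toBlocks₂₂) 0 ((Em x k).toBlocks₁₂) := by
  ext r r'
  rcases r with a | b <;> rcases r' with a' | b' <;>
    simp [Zm, τe, Matrix.fromBlocks, Matrix.one_apply, Matrix.toBlocks₁₂, Matrix.toBlocks₂₂,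
      Sum.inr.injEq, eq_comm]

lemma hdetZ' : ((Zm x k).submatrix ⇑(τe k) id).det = ((Em x k).toBlocks₁₂).det := by
  rw [hZ', Matrix.det_fromBlocks_zero₂₁, Matrix.det_one, one_mul]

/-- the big Toeplitz matrix -/
noncomputable def Mbig : Matrix (Fin (2 * k + 1)) (Fin (2 * k + 1)) ℂ :=
  Matrix.of fun i j => Tm x (i : ℕ) (j : ℕ)

lemma hMbig : (Mbig x k).det = 1 := by
  have htri : (Mbig x k).BlockTriangular id := by
    intro i j hij
    unfold Mbig Tm
    simp only [Matrix.of_apply]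
    rw [if_neg (by exact_mod_cast Nat.not_le.mpr hij)]
  rw [Matrix.det_of_upperTriangular htri]
  refine Finset.prod_eq_one fun i _ => ?_
  unfold Mbig Tm
  simp [mu_zero_eq]

/-- row relabeling equivalence -/
def eRe : Fin (k + 1) ⊕ Fin k ≃ Fin (2 * k + 1) :=
  finSumFinEquiv.trans (finCongr (by omega))

def cEe : Fin k ⊕ Fin (k + 1) ≃ Fin (2 * k + 1) :=
  finSumFinEquiv.trans (finCongr (by omega))

lemma h_eR : ∀ r, ((eRe k r : Fin (2 * k + 1)) : ℕ) = ri k r := by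
  rintro (a | b) <;> simp [eRe, ri] <;> omega

lemma h_cE : ∀ c, ((cEe k c : Fin (2 * k + 1)) : ℕ) = ci k c := by
  rintro (b | a) <;> simp [cEe, ci] <;> omega

/-- the rotation permutation -/
def πe : Equiv.Perm (Fin (k + 1) ⊕ Fin k) := ((τe k).trans (cEe k)).trans (eRe k).symm

lemma hXsub : (Xm x k).submatrix id ⇑(τe k)
    = ((Mbig x k).submatrix ⇑(eRe k) ⇑(eRe k)).submatrix id ⇑(πe k) := by
  ext r r'
  simp only [Matrix.submatrix_apply, id_eq]
  have h1 : eRe k (πe k r') = cEe k (τe k r') := by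
    simp [πe]
  rw [h1]
  show Tm x (ri k r) (ci k (τe k r')) = Tm x _ _
  rw [h_eR, h_cE]

open Fin.NatCast Fin.CommRing in
lemma hrot (m : ℕ) (i : Fin (2 * k + 1)) :
    ((finRotate (2 * k + 1)) ^ m) i = i + (m : Fin (2 * k + 1)) := by
  induction m with
  | zero => simp
  | succ m ih =>
    rw [pow_succ']
    rw [Equiv.Perm.mul_apply, finRotate_succ_apply, ih]
    push_cast
    ring

open Fin.NatCast in
lemma hψ : ∀ r, cEe k (τe k r) = eRe k r + (k : Fin (2 * k + 1)) := by
  have hkval : ((k : Fin (2 * k + 1)) : ℕ) = k := by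
    rw [Fin.val_natCast]
    exact Nat.mod_eq_of_lt (by omega)
  rintro (a | b)
  · apply Fin.ext
    rw [Fin.val_add, hkval]
    have h1 : ((cEe k (τe k (Sum.inl a)) : Fin (2 * k + 1)) : ℕ) = k + (a : ℕ) := h_cE k _
    have h2 : ((eRe k (Sum.inl a) : Fin (2 * k + 1)) : ℕ) = (a : ℕ) := h_eR k _
    rw [h1, h2, Nat.mod_eq_of_lt (by have := a.isLt; omega)]
    omega
  · apply Fin.ext
    rw [Fin.val_add, hkval]
    have h1 : ((cEe k (τe k (Sum.inr b)) : Fin (2 * k + 1)) : ℕ) = (b : ℕ) := h_cE k _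
    have h2 : ((eRe k (Sum.inr b) : Fin (2 * k + 1)) : ℕ) = k + 1 + (b : ℕ) := h_eR k _
    rw [h1, h2]
    have h3 : k + 1 + (b : ℕ) + k = (b : ℕ) + (2 * k + 1) := by omega
    rw [h3, Nat.add_mod_right, Nat.mod_eq_of_lt (by have := b.isLt; omega)]

lemma hsign : Equiv.Perm.sign (πe k) = 1 := by
  have hconj : (eRe k).permCongr (πe k) = (finRotate (2 * k + 1)) ^ k := by
    ext i
    rw [Equiv.permCongr_apply]
    have h1 : πe k ((eRe k).symm i) = (eRe k).symm (cEe k (τe k ((eRe k).symm i))) := by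
      simp [πe]
    rw [h1, Equiv.apply_symm_apply, hψ, Equiv.apply_symm_apply, hrot]
  have h2 := Equiv.Perm.sign_permCongr (eRe k) (πe k)
  rw [hconj] at h2
  rw [← h2, map_pow, sign_finRotate, ← pow_mul]
  have : Even (2 * k * k) := ⟨k * k, by ring⟩
  exact this.neg_one_pow

lemma key_det : ((Xm x k).toBlocks₁₂).det = ((Em x k).toBlocks₁₂).det := by
  have h1 : ((Xm x k).submatrix id ⇑(τe k)).det = 1 := by
    rw [hXsub]
    have h2 : (((Mbig x k).submatrix ⇑(eRe k) ⇑(eRe k)).submatrix id ⇑(πe k)).det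
        = Equiv.Perm.sign (πe k) * ((Mbig x k).submatrix ⇑(eRe k) ⇑(eRe k)).det :=
      Matrix.det_permute' (πe k) _
    rw [h2, Matrix.det_submatrix_equiv_self, hMbig, hsign]
    simp
  calc ((Xm x k).toBlocks₁₂).det = (Xm x k * Zm x k).det := (hdetXZ x k).symm
    _ = ((Xm x k).submatrix id ⇑(τe k)).det * ((Zm x k).submatrix ⇑(τe k) id).det := by
        rw [← hfactor, Matrix.det_mul]
    _ = ((Em x k).toBlocks₁₂).det := by rw [h1, hdetZ', one_mul]

lemma rev_decomp (m : ℕ) : (Fin.revPerm : Equiv.Perm (Fin (m + 1)))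
    = Equiv.Perm.decomposeFin.symm (0, (Fin.revPerm : Equiv.Perm (Fin m)))
        * finRotate (m + 1) := by
  apply Equiv.ext
  intro i
  rw [Equiv.Perm.mul_apply]
  induction i using Fin.lastCases with
  | last =>
    rw [finRotate_succ_apply, Fin.last_add_one, Equiv.Perm.decomposeFin_symm_apply_zero]
    simp only [Fin.revPerm_apply]
    exact Fin.rev_last m
  | cast j =>
    rw [finRotate_succ_apply, Fin.coeSucc_eq_succ, Equiv.Perm.decomposeFin_symm_apply_succ]
    simp only [Fin.revPerm_apply]
    rw [Equiv.swap_self, Fin.rev_castSucc]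
    rfl

lemma sign_rev_succ (m : ℕ) :
    Equiv.Perm.sign (Fin.revPerm : Equiv.Perm (Fin (m + 1)))
      = (-1) ^ m * Equiv.Perm.sign (Fin.revPerm : Equiv.Perm (Fin m)) := by
  rw [rev_decomp, map_mul, Equiv.Perm.decomposeFin.symm_sign, if_pos rfl, one_mul,
    sign_finRotate]
  exact mul_comm _ _

lemma neg_one_pow_sub (b m : ℕ) (h : b ≤ m) : (-1 : ℂ) ^ (m - b) = (-1) ^ b * (-1) ^ m := by
  have h2 : (-1 : ℂ) ^ (m - b) * (-1) ^ b = (-1) ^ m := by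
    rw [← pow_add]
    congr 1
    omega
  have h3 : (-1 : ℂ) ^ b * (-1) ^ b = 1 := by
    rw [← pow_add]
    exact Even.neg_one_pow ⟨b, rfl⟩
  calc (-1 : ℂ) ^ (m - b) = (-1) ^ (m - b) * ((-1) ^ b * (-1) ^ b) := by rw [h3, mul_one]
    _ = ((-1) ^ (m - b) * (-1) ^ b) * (-1) ^ b := by ring
    _ = (-1) ^ b * (-1) ^ m := by rw [h2]; ring

lemma hXa : ((Xm x k).toBlocks₁₂).submatrix ⇑(Fin.revPerm) id
    = (Matrix.of fun i j : Fin (k + 1) => mu ((i : ℕ) + (j : ℕ)) x) := by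
  ext i j
  show Tm x (ri k (Sum.inl (Fin.rev i))) (ci k (Sum.inr j)) = mu ((i : ℕ) + (j : ℕ)) x
  unfold Tm
  simp only [ri, ci, Sum.elim_inl, Sum.elim_inr, Fin.val_rev]
  refine (if_pos (by have := i.isLt; omega)).trans ?_
  congr 1
  have := i.isLt
  omega

lemma detHa : (Matrix.of fun i j : Fin (k + 1) => mu ((i : ℕ) + (j : ℕ)) x).det
    = Equiv.Perm.sign (Fin.revPerm : Equiv.Perm (Fin (k + 1)))
        * ((Xm x k).toBlocks₁₂).det := by
  rw [← hXa]
  exact Matrix.det_permute _ _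

noncomputable def Nb : Matrix (Fin k) (Fin k) ℂ :=
  Matrix.of fun b b' => mu (k + 1 + (b' : ℕ) - (b : ℕ)) x

lemma detEb : ((Em x k).toBlocks₁₂).det = (Nb x k).det := by
  have hentry : (Em x k).toBlocks₁₂
      = Matrix.of fun b b' : Fin k => ((-1 : ℂ) ^ (b : ℕ)) *
          ((Matrix.of fun b b' : Fin k => ((-1 : ℂ) ^ (k + 1 + (b' : ℕ))) * Nb x k b b')
            b b') := by
    ext b b'
    show Sm x (ci k (Sum.inl b)) (ri k (Sum.inr b')) = _
    unfold Sm
    simp only [ri, ci, Sum.elim_inl, Sum.elim_inr, Matrix.of_apply]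
    refine (if_pos (by have := b.isLt; omega)).trans ?_
    rw [neg_one_pow_sub _ _ (by have := b.isLt; omega)]
    show _ = (-1 : ℂ) ^ (b : ℕ) * ((-1 : ℂ) ^ (k + 1 + (b' : ℕ)) * mu (k + 1 + (b' : ℕ) - (b : ℕ)) x)
    ring
  rw [hentry, Matrix.det_mul_column, Matrix.det_mul_row]
  rw [Finset.prod_pow_eq_pow_sum, Finset.prod_pow_eq_pow_sum, ← mul_assoc, ← pow_add]
  have heven : Even ((∑ i : Fin k, (i : ℕ)) + ∑ i : Fin k, (k + 1 + (i : ℕ))) := by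
    have hsum : ∑ i : Fin k, (k + 1 + (i : ℕ)) = k * (k + 1) + ∑ i : Fin k, (i : ℕ) := by
      rw [Finset.sum_add_distrib, Finset.sum_const, Finset.card_univ, Fintype.card_fin,
        smul_eq_mul]
    rw [hsum]
    have h2 : Even (k * (k + 1)) := Nat.even_mul_succ_self k
    have h3 : (∑ i : Fin k, (i : ℕ)) + (k * (k + 1) + ∑ i : Fin k, (i : ℕ))
        = ((∑ i : Fin k, (i : ℕ)) + ∑ i : Fin k, (i : ℕ)) + k * (k + 1) := by ring
    rw [h3]
    exact (Even.add ⟨_, rfl⟩ h2)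
  rw [heven.neg_one_pow, one_mul]

lemma hNb : (Nb x k).submatrix ⇑(Fin.revPerm) id
    = (Matrix.of fun b b' : Fin k => mu ((b : ℕ) + (b' : ℕ) + 2) x) := by
  ext b b'
  show mu (k + 1 + (b' : ℕ) - ((Fin.rev b) : ℕ)) x = mu ((b : ℕ) + (b' : ℕ) + 2) x
  rw [Fin.val_rev]
  congr 1
  have := b.isLt
  omega

lemma detHb : (Matrix.of fun b b' : Fin k => mu ((b : ℕ) + (b' : ℕ) + 2) x).det
    = Equiv.Perm.sign (Fin.revPerm : Equiv.Perm (Fin k)) * (Nb x k).det := by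
  rw [← hNb]
  exact Matrix.det_permute _ _

end HankelShift

open HankelShift
/-- Hankel determinant shift identity:
`(-1)^{n-1} det[μ_{ℓ+j}]_{ℓ,j=1}^{n-1} = det[μ_{ℓ+j-2}]_{ℓ,j=1}^{n}`. -/
theorem hankel_shift_identity (n : ℕ) (hn : 2 ≤ n) (x : ℂ) :
    (-1 : ℂ) ^ (n - 1) *
        Matrix.det (Matrix.of fun ℓ j : Fin (n - 1) => mu ((ℓ : ℕ) + (j : ℕ) + 2) x) =
      Matrix.det (Matrix.of fun ℓ j : Fin n => mu ((ℓ : ℕ) + (j : ℕ)) x) := by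
  obtain ⟨k, rfl⟩ : ∃ k, n = k + 1 := ⟨n - 1, by omega⟩
  show (-1 : ℂ) ^ k *
      (Matrix.of fun ℓ j : Fin k => mu ((ℓ : ℕ) + (j : ℕ) + 2) x).det
    = (Matrix.of fun ℓ j : Fin (k + 1) => mu ((ℓ : ℕ) + (j : ℕ)) x).det
  rw [detHa x k, detHb x k, key_det x k, detEb x k]
  have hsigns := sign_rev_succ k
  have hcast : ((Equiv.Perm.sign (Fin.revPerm : Equiv.Perm (Fin (k + 1))) : ℤ) : ℂ)
      = (-1 : ℂ) ^ k * ((Equiv.Perm.sign (Fin.revPerm : Equiv.Perm (Fin k)) : ℤ) : ℂ) := by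
    rw [hsigns]
    push_cast
    ring
  rw [hcast]
  ring
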